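/- Set x := 2 + √3, ω := e¹⁴ + e²⁵ + e³⁶, ψ⁺ := −(x²/2)e¹²³ + 2x·e¹²⁶ − 2x·e¹³⁵ − 2x·e¹⁵⁶ + 2x·e²³⁴ + 2x·e²⁴⁶ − 2x·e³⁴⁵ + (4x−8)e⁴⁵⁶ and ψ⁻ := (x/2)e¹²³ − 2e¹⁵⁶ + 2e²⁴⁶ − 2e³⁴⁵ + 4e⁴⁵⁶. Then dψ⁺ = 0 and dψ⁻ = ω ∧ ω, while dω ≠ 0. -/
import Mathlib


open Finset

/-- Model of the exterior algebra of `(ℝ⁶)*`: an element is given by its coefficients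
with respect to the basis monomials `e^S = e^{i₁} ∧ … ∧ e^{i_k}`, `S = {i₁ < … < i_k}`. -/
abbrev E : Type := Finset (Fin 6) → ℝ

/-- The wedge product in this model: the sign is the parity of the number of
inversions when merging the (sorted) index sets. -/
noncomputable def wedge (a b : E) : E := fun S =>
  ∑ T ∈ S.powerset,
    (-1 : ℝ) ^ (((T ×ˢ (S \ T)).filter (fun p => p.2 < p.1)).card) * a T * b (S \ T)

/-- The basis monomial `e^S`. -/
def bas (S : Finset (Fin 6)) : E := fun T => if T = S then 1 else 0

/-- The volume form `vol = e^{123456}`. -/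
noncomputable def vol : E := bas Finset.univ

/-- Interior product (contraction) `v ⌟ a` of a vector `v ∈ ℝ⁶` with a form `a`. -/
noncomputable def contr (v : Fin 6 → ℝ) (a : E) : E := fun S =>
  ∑ i : Fin 6,
    if i ∈ S then 0
    else (-1 : ℝ) ^ ((S.filter (fun s => s < i)).card) * v i * a (insert i S)

/-- `a` is a `k`-form, i.e. concentrated in degree `k`. -/
def IsForm (k : ℕ) (a : E) : Prop := ∀ S, S.card ≠ k → a S = 0

/-- The differential on the generators (`0`-indexed): `de¹ = e²³`, `de² = e³¹ = -e¹³`,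
`de³ = e¹²`, `de⁴ = e⁵⁶`, `de⁵ = e⁶⁴ = -e⁴⁶`, `de⁶ = e⁴⁵`
(the structure constants of `𝔰𝔲(2) ⊕ 𝔰𝔲(2)`). -/
noncomputable def dgen : Fin 6 → E := fun i =>
  if i = 0 then bas {1, 2}
  else if i = 1 then -bas {0, 2}
  else if i = 2 then bas {0, 1}
  else if i = 3 then bas {4, 5}
  else if i = 4 then -bas {3, 5}
  else bas {3, 4}

/-- The Chevalley–Eilenberg differential: the unique degree `+1` antiderivation of the
exterior algebra extending `dgen`; on a basis monomial `e^S`, `S = {i₁ < … < i_k}`, it is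
`d(e^S) = ∑ₜ (-1)^{t-1} e^{S \ {i_t}} ∧ d(e^{i_t})`, extended linearly. -/
noncomputable def d (a : E) : E :=
  ∑ S : Finset (Fin 6), ∑ t ∈ S,
    (a S * (-1 : ℝ) ^ ((S.filter (fun s => s < t)).card)) • wedge (bas (S.erase t)) (dgen t)

/-- `x = 2 + √3`. -/
noncomputable def xc : ℝ := 2 + Real.sqrt 3

/-- `ω = e¹⁴ + e²⁵ + e³⁶`. -/
noncomputable def omega12 : E := bas {0, 3} + bas {1, 4} + bas {2, 5}

/-- `ψ⁺ = -(x²/2)e¹²³ + 2x e¹²⁶ - 2x e¹³⁵ - 2x e¹⁵⁶ + 2x e²³⁴ + 2x e²⁴⁶ - 2x e³⁴⁵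
+ (4x-8)e⁴⁵⁶`. -/
noncomputable def psiP12 : E :=
  (-(xc ^ 2 / 2)) • bas {0, 1, 2} + (2 * xc) • bas {0, 1, 5} - (2 * xc) • bas {0, 2, 4}
    - (2 * xc) • bas {0, 4, 5} + (2 * xc) • bas {1, 2, 3} + (2 * xc) • bas {1, 3, 5}
    - (2 * xc) • bas {2, 3, 4} + (4 * xc - 8) • bas {3, 4, 5}

/-- `ψ⁻ = (x/2)e¹²³ - 2e¹⁵⁶ + 2e²⁴⁶ - 2e³⁴⁵ + 4e⁴⁵⁶`. -/
noncomputable def psiM12 : E :=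
  (xc / 2) • bas {0, 1, 2} - (2 : ℝ) • bas {0, 4, 5} + (2 : ℝ) • bas {1, 3, 5}
    - (2 : ℝ) • bas {2, 3, 4} + (4 : ℝ) • bas {3, 4, 5}


section Aux

lemma d_add (a b : E) : d (a + b) = d a + d b := by
  unfold d
  rw [← Finset.sum_add_distrib]
  refine Finset.sum_congr rfl fun S _ => ?_
  rw [← Finset.sum_add_distrib]
  refine Finset.sum_congr rfl fun t _ => ?_
  simp [add_mul, add_smul]

lemma d_sub (a b : E) : d (a - b) = d a - d b := by
  unfold d
  rw [← Finset.sum_sub_distrib]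
  refine Finset.sum_congr rfl fun S _ => ?_
  rw [← Finset.sum_sub_distrib]
  refine Finset.sum_congr rfl fun t _ => ?_
  simp [sub_mul, sub_smul]

lemma d_smul (c : ℝ) (a : E) : d (c • a) = c • d a := by
  unfold d
  rw [Finset.smul_sum]
  refine Finset.sum_congr rfl fun S _ => ?_
  rw [Finset.smul_sum]
  refine Finset.sum_congr rfl fun t _ => ?_
  simp [smul_smul, mul_assoc]

lemma d_bas (S : Finset (Fin 6)) :
    d (bas S) = ∑ t ∈ S, ((-1 : ℝ) ^ ((S.filter (fun s => s < t)).card)) •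
      wedge (bas (S.erase t)) (dgen t) := by
  unfold d
  rw [Finset.sum_eq_single S]
  · simp [bas]
  · intro b _ hb
    refine Finset.sum_eq_zero fun t _ => ?_
    simp [bas, hb]
  · simp

lemma wedge_neg_right (a b : E) : wedge a (-b) = -(wedge a b) := by
  funext S
  unfold wedge
  simp [mul_neg, ← Finset.sum_neg_distrib]

lemma wedge_add_left (a b c : E) : wedge (a + b) c = wedge a c + wedge b c := by
  funext S
  simp only [wedge, Pi.add_apply]
  rw [← Finset.sum_add_distrib]
  exact Finset.sum_congr rfl fun T _ => by ring

lemma wedge_add_right (a b c : E) : wedge a (b + c) = wedge a b + wedge a c := by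
  funext S
  simp only [wedge, Pi.add_apply]
  rw [← Finset.sum_add_distrib]
  exact Finset.sum_congr rfl fun T _ => by ring

lemma wedge_bas_apply (A B T : Finset (Fin 6)) :
    wedge (bas A) (bas B) T =
      if A ⊆ T ∧ T \ A = B then
        (-1 : ℝ) ^ (((A ×ˢ (T \ A)).filter (fun p => p.2 < p.1)).card) else 0 := by
  unfold wedge bas
  by_cases hA : A ⊆ T
  · rw [Finset.sum_eq_single A]
    · simp only [if_pos rfl, mul_one]
      by_cases hB : T \ A = B
      · simp [hA, hB]
      · simp [hA, hB]
    · intro b _ hb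
      simp [hb]
    · intro h
      exact absurd (Finset.mem_powerset.mpr hA) h
  · rw [Finset.sum_eq_zero, if_neg (by tauto)]
    intro b hb
    have hbA : b ≠ A := fun h => hA (h ▸ Finset.mem_powerset.mp hb)
    simp [hbA]

lemma wedge_bas_of_disjoint (A B : Finset (Fin 6)) (h : Disjoint A B) :
    wedge (bas A) (bas B) =
      ((-1 : ℝ) ^ (((A ×ˢ B).filter (fun p => p.2 < p.1)).card)) • bas (A ∪ B) := by
  funext T
  rw [wedge_bas_apply]
  by_cases hT : T = A ∪ B
  · subst hT
    have h2 : (A ∪ B) \ A = B := Finset.union_sdiff_cancel_left h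
    rw [if_pos ⟨Finset.subset_union_left, h2⟩, h2]
    simp [bas]
  · rw [if_neg, Pi.smul_apply]
    · simp [bas, hT]
    · rintro ⟨h1, h2⟩
      exact hT (by rw [← h2, Finset.union_sdiff_of_subset h1])

lemma wedge_bas_of_not_disjoint (A B : Finset (Fin 6)) (h : ¬ Disjoint A B) :
    wedge (bas A) (bas B) = 0 := by
  funext T
  rw [wedge_bas_apply, if_neg, Pi.zero_apply]
  rintro ⟨h1, h2⟩
  exact h (h2 ▸ Finset.disjoint_sdiff)

lemma wedge_bas_eq (A B C : Finset (Fin 6)) (n : ℕ) (h : Disjoint A B) (hC : A ∪ B = C)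
    (hn : ((A ×ˢ B).filter (fun p => p.2 < p.1)).card = n) :
    wedge (bas A) (bas B) = ((-1 : ℝ) ^ n) • bas C := by
  rw [wedge_bas_of_disjoint A B h, hC, hn]

lemma sum2 (f : Fin 6 → E) (a b : Fin 6) (hab : a ≠ b) :
    ∑ t ∈ ({a, b} : Finset (Fin 6)), f t = f a + f b := by
  rw [Finset.sum_insert (by simp [hab]), Finset.sum_singleton]

lemma sum3 (f : Fin 6 → E) (a b c : Fin 6) (hab : a ≠ b) (hac : a ≠ c) (hbc : b ≠ c) :
    ∑ t ∈ ({a, b, c} : Finset (Fin 6)), f t = f a + f b + f c := by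
  rw [Finset.sum_insert (by simp [hab, hac]), Finset.sum_insert (by simp [hbc]),
    Finset.sum_singleton, add_assoc]

end Aux

lemma dbas_012 : d (bas ({0, 1, 2} : Finset (Fin 6))) = 0 := by
  rw [d_bas, sum3 _ 0 1 2 (by decide) (by decide) (by decide)]
  rw [show (Finset.filter (fun s => s < (0 : Fin 6)) ({0, 1, 2} : Finset (Fin 6))).card = 0 from by decide]
  rw [show ({0, 1, 2} : Finset (Fin 6)).erase 0 = {1, 2} from by decide]
  rw [show dgen 0 = bas {1, 2} from rfl]
  rw [wedge_bas_of_not_disjoint {1, 2} {1, 2} (by decide)]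
  rw [show (Finset.filter (fun s => s < (1 : Fin 6)) ({0, 1, 2} : Finset (Fin 6))).card = 1 from by decide]
  rw [show ({0, 1, 2} : Finset (Fin 6)).erase 1 = {0, 2} from by decide]
  rw [show dgen 1 = -bas {0, 2} from rfl]
  rw [wedge_neg_right (bas {0, 2}) (bas {0, 2})]
  rw [wedge_bas_of_not_disjoint {0, 2} {0, 2} (by decide)]
  rw [show (Finset.filter (fun s => s < (2 : Fin 6)) ({0, 1, 2} : Finset (Fin 6))).card = 2 from by decide]
  rw [show ({0, 1, 2} : Finset (Fin 6)).erase 2 = {0, 1} from by decide]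
  rw [show dgen 2 = bas {0, 1} from rfl]
  rw [wedge_bas_of_not_disjoint {0, 1} {0, 1} (by decide)]
  module

lemma dbas_015 : d (bas ({0, 1, 5} : Finset (Fin 6))) = bas {0, 1, 3, 4} := by
  rw [d_bas, sum3 _ 0 1 5 (by decide) (by decide) (by decide)]
  rw [show (Finset.filter (fun s => s < (0 : Fin 6)) ({0, 1, 5} : Finset (Fin 6))).card = 0 from by decide]
  rw [show ({0, 1, 5} : Finset (Fin 6)).erase 0 = {1, 5} from by decide]
  rw [show dgen 0 = bas {1, 2} from rfl]
  rw [wedge_bas_of_not_disjoint {1, 5} {1, 2} (by decide)]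
  rw [show (Finset.filter (fun s => s < (1 : Fin 6)) ({0, 1, 5} : Finset (Fin 6))).card = 1 from by decide]
  rw [show ({0, 1, 5} : Finset (Fin 6)).erase 1 = {0, 5} from by decide]
  rw [show dgen 1 = -bas {0, 2} from rfl]
  rw [wedge_neg_right (bas {0, 5}) (bas {0, 2})]
  rw [wedge_bas_of_not_disjoint {0, 5} {0, 2} (by decide)]
  rw [show (Finset.filter (fun s => s < (5 : Fin 6)) ({0, 1, 5} : Finset (Fin 6))).card = 2 from by decide]
  rw [show ({0, 1, 5} : Finset (Fin 6)).erase 5 = {0, 1} from by decide]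
  rw [show dgen 5 = bas {3, 4} from rfl]
  rw [wedge_bas_eq {0, 1} {3, 4} {0, 1, 3, 4} 0 (by decide) (by decide) (by decide)]
  module

lemma dbas_024 : d (bas ({0, 2, 4} : Finset (Fin 6))) = -bas {0, 2, 3, 5} := by
  rw [d_bas, sum3 _ 0 2 4 (by decide) (by decide) (by decide)]
  rw [show (Finset.filter (fun s => s < (0 : Fin 6)) ({0, 2, 4} : Finset (Fin 6))).card = 0 from by decide]
  rw [show ({0, 2, 4} : Finset (Fin 6)).erase 0 = {2, 4} from by decide]
  rw [show dgen 0 = bas {1, 2} from rfl]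
  rw [wedge_bas_of_not_disjoint {2, 4} {1, 2} (by decide)]
  rw [show (Finset.filter (fun s => s < (2 : Fin 6)) ({0, 2, 4} : Finset (Fin 6))).card = 1 from by decide]
  rw [show ({0, 2, 4} : Finset (Fin 6)).erase 2 = {0, 4} from by decide]
  rw [show dgen 2 = bas {0, 1} from rfl]
  rw [wedge_bas_of_not_disjoint {0, 4} {0, 1} (by decide)]
  rw [show (Finset.filter (fun s => s < (4 : Fin 6)) ({0, 2, 4} : Finset (Fin 6))).card = 2 from by decide]
  rw [show ({0, 2, 4} : Finset (Fin 6)).erase 4 = {0, 2} from by decide]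
  rw [show dgen 4 = -bas {3, 5} from rfl]
  rw [wedge_neg_right (bas {0, 2}) (bas {3, 5})]
  rw [wedge_bas_eq {0, 2} {3, 5} {0, 2, 3, 5} 0 (by decide) (by decide) (by decide)]
  module

lemma dbas_045 : d (bas ({0, 4, 5} : Finset (Fin 6))) = bas {1, 2, 4, 5} := by
  rw [d_bas, sum3 _ 0 4 5 (by decide) (by decide) (by decide)]
  rw [show (Finset.filter (fun s => s < (0 : Fin 6)) ({0, 4, 5} : Finset (Fin 6))).card = 0 from by decide]
  rw [show ({0, 4, 5} : Finset (Fin 6)).erase 0 = {4, 5} from by decide]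
  rw [show dgen 0 = bas {1, 2} from rfl]
  rw [wedge_bas_eq {4, 5} {1, 2} {1, 2, 4, 5} 4 (by decide) (by decide) (by decide)]
  rw [show (Finset.filter (fun s => s < (4 : Fin 6)) ({0, 4, 5} : Finset (Fin 6))).card = 1 from by decide]
  rw [show ({0, 4, 5} : Finset (Fin 6)).erase 4 = {0, 5} from by decide]
  rw [show dgen 4 = -bas {3, 5} from rfl]
  rw [wedge_neg_right (bas {0, 5}) (bas {3, 5})]
  rw [wedge_bas_of_not_disjoint {0, 5} {3, 5} (by decide)]
  rw [show (Finset.filter (fun s => s < (5 : Fin 6)) ({0, 4, 5} : Finset (Fin 6))).card = 2 from by decide]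
  rw [show ({0, 4, 5} : Finset (Fin 6)).erase 5 = {0, 4} from by decide]
  rw [show dgen 5 = bas {3, 4} from rfl]
  rw [wedge_bas_of_not_disjoint {0, 4} {3, 4} (by decide)]
  module

lemma dbas_123 : d (bas ({1, 2, 3} : Finset (Fin 6))) = bas {1, 2, 4, 5} := by
  rw [d_bas, sum3 _ 1 2 3 (by decide) (by decide) (by decide)]
  rw [show (Finset.filter (fun s => s < (1 : Fin 6)) ({1, 2, 3} : Finset (Fin 6))).card = 0 from by decide]
  rw [show ({1, 2, 3} : Finset (Fin 6)).erase 1 = {2, 3} from by decide]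
  rw [show dgen 1 = -bas {0, 2} from rfl]
  rw [wedge_neg_right (bas {2, 3}) (bas {0, 2})]
  rw [wedge_bas_of_not_disjoint {2, 3} {0, 2} (by decide)]
  rw [show (Finset.filter (fun s => s < (2 : Fin 6)) ({1, 2, 3} : Finset (Fin 6))).card = 1 from by decide]
  rw [show ({1, 2, 3} : Finset (Fin 6)).erase 2 = {1, 3} from by decide]
  rw [show dgen 2 = bas {0, 1} from rfl]
  rw [wedge_bas_of_not_disjoint {1, 3} {0, 1} (by decide)]
  rw [show (Finset.filter (fun s => s < (3 : Fin 6)) ({1, 2, 3} : Finset (Fin 6))).card = 2 from by decide]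
  rw [show ({1, 2, 3} : Finset (Fin 6)).erase 3 = {1, 2} from by decide]
  rw [show dgen 3 = bas {4, 5} from rfl]
  rw [wedge_bas_eq {1, 2} {4, 5} {1, 2, 4, 5} 0 (by decide) (by decide) (by decide)]
  module

lemma dbas_135 : d (bas ({1, 3, 5} : Finset (Fin 6))) = -bas {0, 2, 3, 5} := by
  rw [d_bas, sum3 _ 1 3 5 (by decide) (by decide) (by decide)]
  rw [show (Finset.filter (fun s => s < (1 : Fin 6)) ({1, 3, 5} : Finset (Fin 6))).card = 0 from by decide]
  rw [show ({1, 3, 5} : Finset (Fin 6)).erase 1 = {3, 5} from by decide]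
  rw [show dgen 1 = -bas {0, 2} from rfl]
  rw [wedge_neg_right (bas {3, 5}) (bas {0, 2})]
  rw [wedge_bas_eq {3, 5} {0, 2} {0, 2, 3, 5} 4 (by decide) (by decide) (by decide)]
  rw [show (Finset.filter (fun s => s < (3 : Fin 6)) ({1, 3, 5} : Finset (Fin 6))).card = 1 from by decide]
  rw [show ({1, 3, 5} : Finset (Fin 6)).erase 3 = {1, 5} from by decide]
  rw [show dgen 3 = bas {4, 5} from rfl]
  rw [wedge_bas_of_not_disjoint {1, 5} {4, 5} (by decide)]
  rw [show (Finset.filter (fun s => s < (5 : Fin 6)) ({1, 3, 5} : Finset (Fin 6))).card = 2 from by decide]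
  rw [show ({1, 3, 5} : Finset (Fin 6)).erase 5 = {1, 3} from by decide]
  rw [show dgen 5 = bas {3, 4} from rfl]
  rw [wedge_bas_of_not_disjoint {1, 3} {3, 4} (by decide)]
  module

lemma dbas_234 : d (bas ({2, 3, 4} : Finset (Fin 6))) = bas {0, 1, 3, 4} := by
  rw [d_bas, sum3 _ 2 3 4 (by decide) (by decide) (by decide)]
  rw [show (Finset.filter (fun s => s < (2 : Fin 6)) ({2, 3, 4} : Finset (Fin 6))).card = 0 from by decide]
  rw [show ({2, 3, 4} : Finset (Fin 6)).erase 2 = {3, 4} from by decide]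
  rw [show dgen 2 = bas {0, 1} from rfl]
  rw [wedge_bas_eq {3, 4} {0, 1} {0, 1, 3, 4} 4 (by decide) (by decide) (by decide)]
  rw [show (Finset.filter (fun s => s < (3 : Fin 6)) ({2, 3, 4} : Finset (Fin 6))).card = 1 from by decide]
  rw [show ({2, 3, 4} : Finset (Fin 6)).erase 3 = {2, 4} from by decide]
  rw [show dgen 3 = bas {4, 5} from rfl]
  rw [wedge_bas_of_not_disjoint {2, 4} {4, 5} (by decide)]
  rw [show (Finset.filter (fun s => s < (4 : Fin 6)) ({2, 3, 4} : Finset (Fin 6))).card = 2 from by decide]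
  rw [show ({2, 3, 4} : Finset (Fin 6)).erase 4 = {2, 3} from by decide]
  rw [show dgen 4 = -bas {3, 5} from rfl]
  rw [wedge_neg_right (bas {2, 3}) (bas {3, 5})]
  rw [wedge_bas_of_not_disjoint {2, 3} {3, 5} (by decide)]
  module

lemma dbas_345 : d (bas ({3, 4, 5} : Finset (Fin 6))) = 0 := by
  rw [d_bas, sum3 _ 3 4 5 (by decide) (by decide) (by decide)]
  rw [show (Finset.filter (fun s => s < (3 : Fin 6)) ({3, 4, 5} : Finset (Fin 6))).card = 0 from by decide]
  rw [show ({3, 4, 5} : Finset (Fin 6)).erase 3 = {4, 5} from by decide]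
  rw [show dgen 3 = bas {4, 5} from rfl]
  rw [wedge_bas_of_not_disjoint {4, 5} {4, 5} (by decide)]
  rw [show (Finset.filter (fun s => s < (4 : Fin 6)) ({3, 4, 5} : Finset (Fin 6))).card = 1 from by decide]
  rw [show ({3, 4, 5} : Finset (Fin 6)).erase 4 = {3, 5} from by decide]
  rw [show dgen 4 = -bas {3, 5} from rfl]
  rw [wedge_neg_right (bas {3, 5}) (bas {3, 5})]
  rw [wedge_bas_of_not_disjoint {3, 5} {3, 5} (by decide)]
  rw [show (Finset.filter (fun s => s < (5 : Fin 6)) ({3, 4, 5} : Finset (Fin 6))).card = 2 from by decide]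
  rw [show ({3, 4, 5} : Finset (Fin 6)).erase 5 = {3, 4} from by decide]
  rw [show dgen 5 = bas {3, 4} from rfl]
  rw [wedge_bas_of_not_disjoint {3, 4} {3, 4} (by decide)]
  module

lemma dbas_03 : d (bas ({0, 3} : Finset (Fin 6))) = bas {1, 2, 3} - bas {0, 4, 5} := by
  rw [d_bas, sum2 _ 0 3 (by decide)]
  rw [show (Finset.filter (fun s => s < (0 : Fin 6)) ({0, 3} : Finset (Fin 6))).card = 0 from by decide]
  rw [show ({0, 3} : Finset (Fin 6)).erase 0 = {3} from by decide]
  rw [show dgen 0 = bas {1, 2} from rfl]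
  rw [wedge_bas_eq {3} {1, 2} {1, 2, 3} 2 (by decide) (by decide) (by decide)]
  rw [show (Finset.filter (fun s => s < (3 : Fin 6)) ({0, 3} : Finset (Fin 6))).card = 1 from by decide]
  rw [show ({0, 3} : Finset (Fin 6)).erase 3 = {0} from by decide]
  rw [show dgen 3 = bas {4, 5} from rfl]
  rw [wedge_bas_eq {0} {4, 5} {0, 4, 5} 0 (by decide) (by decide) (by decide)]
  module

lemma dbas_14 : d (bas ({1, 4} : Finset (Fin 6))) = -bas {0, 2, 4} + bas {1, 3, 5} := by
  rw [d_bas, sum2 _ 1 4 (by decide)]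
  rw [show (Finset.filter (fun s => s < (1 : Fin 6)) ({1, 4} : Finset (Fin 6))).card = 0 from by decide]
  rw [show ({1, 4} : Finset (Fin 6)).erase 1 = {4} from by decide]
  rw [show dgen 1 = -bas {0, 2} from rfl]
  rw [wedge_neg_right (bas {4}) (bas {0, 2})]
  rw [wedge_bas_eq {4} {0, 2} {0, 2, 4} 2 (by decide) (by decide) (by decide)]
  rw [show (Finset.filter (fun s => s < (4 : Fin 6)) ({1, 4} : Finset (Fin 6))).card = 1 from by decide]
  rw [show ({1, 4} : Finset (Fin 6)).erase 4 = {1} from by decide]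
  rw [show dgen 4 = -bas {3, 5} from rfl]
  rw [wedge_neg_right (bas {1}) (bas {3, 5})]
  rw [wedge_bas_eq {1} {3, 5} {1, 3, 5} 0 (by decide) (by decide) (by decide)]
  module

lemma dbas_25 : d (bas ({2, 5} : Finset (Fin 6))) = bas {0, 1, 5} - bas {2, 3, 4} := by
  rw [d_bas, sum2 _ 2 5 (by decide)]
  rw [show (Finset.filter (fun s => s < (2 : Fin 6)) ({2, 5} : Finset (Fin 6))).card = 0 from by decide]
  rw [show ({2, 5} : Finset (Fin 6)).erase 2 = {5} from by decide]
  rw [show dgen 2 = bas {0, 1} from rfl]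
  rw [wedge_bas_eq {5} {0, 1} {0, 1, 5} 2 (by decide) (by decide) (by decide)]
  rw [show (Finset.filter (fun s => s < (5 : Fin 6)) ({2, 5} : Finset (Fin 6))).card = 1 from by decide]
  rw [show ({2, 5} : Finset (Fin 6)).erase 5 = {2} from by decide]
  rw [show dgen 5 = bas {3, 4} from rfl]
  rw [wedge_bas_eq {2} {3, 4} {2, 3, 4} 0 (by decide) (by decide) (by decide)]
  module


/-- On `𝔰𝔲(2) ⊕ 𝔰𝔲(2)`: `dψ⁺ = 0` and `dψ⁻ = ω ∧ ω`, while `dω ≠ 0`. -/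
theorem stmt_12 : d psiP12 = 0 ∧ d psiM12 = wedge omega12 omega12 ∧ d omega12 ≠ 0 := by
  refine ⟨?_, ?_, ?_⟩
  · unfold psiP12
    simp only [d_add, d_sub, d_smul, dbas_012, dbas_015, dbas_024, dbas_045, dbas_123,
      dbas_135, dbas_234, dbas_345]
    module
  · unfold psiM12 omega12
    simp only [d_add, d_sub, d_smul, dbas_012, dbas_045, dbas_135, dbas_234, dbas_345,
      wedge_add_left, wedge_add_right]
    rw [wedge_bas_of_not_disjoint {0, 3} {0, 3} (by decide),
        wedge_bas_eq {0, 3} {1, 4} {0, 1, 3, 4} 1 (by decide) (by decide) (by decide),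
        wedge_bas_eq {0, 3} {2, 5} {0, 2, 3, 5} 1 (by decide) (by decide) (by decide),
        wedge_bas_eq {1, 4} {0, 3} {0, 1, 3, 4} 3 (by decide) (by decide) (by decide),
        wedge_bas_of_not_disjoint {1, 4} {1, 4} (by decide),
        wedge_bas_eq {1, 4} {2, 5} {1, 2, 4, 5} 1 (by decide) (by decide) (by decide),
        wedge_bas_eq {2, 5} {0, 3} {0, 2, 3, 5} 3 (by decide) (by decide) (by decide),
        wedge_bas_eq {2, 5} {1, 4} {1, 2, 4, 5} 3 (by decide) (by decide) (by decide),
        wedge_bas_of_not_disjoint {2, 5} {2, 5} (by decide)]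
    module
  · intro h
    unfold omega12 at h
    simp only [d_add, dbas_03, dbas_14, dbas_25] at h
    have h2 := congrFun h {1, 2, 3}
    simp only [Pi.add_apply, Pi.sub_apply, Pi.neg_apply, Pi.zero_apply, bas] at h2
    norm_num [show (({1, 2, 3} : Finset (Fin 6)) = {0, 4, 5}) = False from by decide,
      show (({1, 2, 3} : Finset (Fin 6)) = {0, 2, 4}) = False from by decide,
      show (({1, 2, 3} : Finset (Fin 6)) = {1, 3, 5}) = False from by decide,
      show (({1, 2, 3} : Finset (Fin 6)) = {0, 1, 5}) = False from by decide,
      show (({1, 2, 3} : Finset (Fin 6)) = {2, 3, 4}) = False from by decide] at h2
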